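/- For every integer n ≥ 1 and every q ∈ ℍ, the right and left conjugate Fueter operators agree on the monomial q ↦ qⁿ: (qⁿ)D̄ = D̄(qⁿ), i.e. ∂_{q₀}(qⁿ) − Σ_{i=1}^{3} (∂_{q_i} qⁿ) e_i = ∂_{q₀}(qⁿ) − Σ_{i=1}^{3} e_i (∂_{q_i} qⁿ). -/

import Mathlib

noncomputable section

open scoped Quaternion
open Finset

/-- The imaginary units `e₁, e₂, e₃` of the quaternions `ℍ = ℍ[ℝ]`. -/
def e1 : ℍ[ℝ] := ⟨0, 1, 0, 0⟩
def e2 : ℍ[ℝ] := ⟨0, 0, 1, 0⟩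
def e3 : ℍ[ℝ] := ⟨0, 0, 0, 1⟩

/-- The (left) Fueter operator `Df = ∂_{q₀}f + e₁∂_{q₁}f + e₂∂_{q₂}f + e₃∂_{q₃}f`,
where the partial derivatives are the directional derivatives along `1, e₁, e₂, e₃`. -/
def Dop (f : ℍ[ℝ] → ℍ[ℝ]) (q : ℍ[ℝ]) : ℍ[ℝ] :=
  fderiv ℝ f q 1 + e1 * fderiv ℝ f q e1 + e2 * fderiv ℝ f q e2 + e3 * fderiv ℝ f q e3

/-- The (left) conjugate Fueter operator
`D̄f = ∂_{q₀}f − e₁∂_{q₁}f − e₂∂_{q₂}f − e₃∂_{q₃}f`. -/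
def Dbar (f : ℍ[ℝ] → ℍ[ℝ]) (q : ℍ[ℝ]) : ℍ[ℝ] :=
  fderiv ℝ f q 1 - e1 * fderiv ℝ f q e1 - e2 * fderiv ℝ f q e2 - e3 * fderiv ℝ f q e3

/-- The right Fueter operator `fD = ∂_{q₀}f + (∂_{q₁}f)e₁ + (∂_{q₂}f)e₂ + (∂_{q₃}f)e₃`. -/
def DopR (f : ℍ[ℝ] → ℍ[ℝ]) (q : ℍ[ℝ]) : ℍ[ℝ] :=
  fderiv ℝ f q 1 + fderiv ℝ f q e1 * e1 + fderiv ℝ f q e2 * e2 + fderiv ℝ f q e3 * e3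

/-- The right conjugate Fueter operator
`fD̄ = ∂_{q₀}f − (∂_{q₁}f)e₁ − (∂_{q₂}f)e₂ − (∂_{q₃}f)e₃`. -/
def DbarR (f : ℍ[ℝ] → ℍ[ℝ]) (q : ℍ[ℝ]) : ℍ[ℝ] :=
  fderiv ℝ f q 1 - fderiv ℝ f q e1 * e1 - fderiv ℝ f q e2 * e2 - fderiv ℝ f q e3 * e3

/-- The Laplacian in the four real variables `q₀, q₁, q₂, q₃`. -/
def Lap (f : ℍ[ℝ] → ℍ[ℝ]) (q : ℍ[ℝ]) : ℍ[ℝ] :=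
  fderiv ℝ (fun p => fderiv ℝ f p 1) q 1 + fderiv ℝ (fun p => fderiv ℝ f p e1) q e1 +
    fderiv ℝ (fun p => fderiv ℝ f p e2) q e2 + fderiv ℝ (fun p => fderiv ℝ f p e3) q e3

/-- `s ∈ [q]`: membership in the 2-sphere
`[q] = {p : Re(p) = Re(q), |Im(p)| = |Im(q)|}` of `q`. -/
def inSphereOf (s q : ℍ[ℝ]) : Prop := s.re = q.re ∧ ‖s.im‖ = ‖q.im‖

/-- `Q_{c,s}(q) = s² − 2 Re(q) s + |q|²`. -/
def Qc (s q : ℍ[ℝ]) : ℍ[ℝ] := s ^ 2 - 2 * (q.re : ℍ[ℝ]) * s + ((‖q‖ ^ 2 : ℝ) : ℍ[ℝ])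

/-- The left slice hyperholomorphic Cauchy kernel `S_L^{-1}(s,q) = (s − q̄) Q_{c,s}(q)⁻¹`. -/
def SL (s q : ℍ[ℝ]) : ℍ[ℝ] := (s - star q) * (Qc s q)⁻¹

/-- The right slice hyperholomorphic Cauchy kernel `S_R^{-1}(s,q) = Q_{c,s}(q)⁻¹ (s − q̄)`. -/
def SR (s q : ℍ[ℝ]) : ℍ[ℝ] := (Qc s q)⁻¹ * (s - star q)

/-- The left `F`-kernel `F_L(s,q) = −4 (s − q̄) Q_{c,s}(q)^{-2}`. -/
def FL (s q : ℍ[ℝ]) : ℍ[ℝ] := -4 * (s - star q) * ((Qc s q)⁻¹) ^ 2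

/-- The right `F`-kernel `F_R(s,q) = −4 Q_{c,s}(q)^{-2} (s − q̄)`. -/
def FR (s q : ℍ[ℝ]) : ℍ[ℝ] := -4 * ((Qc s q)⁻¹) ^ 2 * (s - star q)

/-- The Clifford–Appell polynomials
`Q_ℓ(q,q̄) = (2/((ℓ+1)(ℓ+2))) Σ_{j=0}^{ℓ} (ℓ−j+1) q^{ℓ−j} q̄^j`. -/
def QA (ℓ : ℕ) (q : ℍ[ℝ]) : ℍ[ℝ] :=
  ((2 : ℝ) / ((ℓ + 1) * (ℓ + 2))) •
    ∑ j ∈ Finset.range (ℓ + 1), ((ℓ - j + 1 : ℕ) : ℍ[ℝ]) * q ^ (ℓ - j) * (star q) ^ j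


theorem sandwich' (a : ℍ[ℝ]) : e1*a*e1 + e2*a*e2 + e3*a*e3 = a - ((4 * a.re : ℝ):ℍ[ℝ]) := by
  apply Quaternion.ext <;> simp only [Quaternion.re_add, Quaternion.imI_add, Quaternion.imJ_add,
    Quaternion.imK_add, Quaternion.re_sub, Quaternion.imI_sub, Quaternion.imJ_sub, Quaternion.imK_sub,
    Quaternion.re_mul, Quaternion.imI_mul, Quaternion.imJ_mul,
    Quaternion.imK_mul] <;> simp [e1, e2, e3] <;> ring

theorem hasFDerivAt_pow'' (n : ℕ) (q : ℍ[ℝ]) : HasFDerivAt (fun p => p ^ n)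
    (∑ i ∈ Finset.range n,
      ContinuousLinearMap.mulLeftRight ℝ ℍ[ℝ] (q ^ i) (q ^ (n - 1 - i))) q := by
  induction n with
  | zero => simpa using hasFDerivAt_const (1 : ℍ[ℝ]) q
  | succ n ih =>
    have h := ih.mul' (hasFDerivAt_id q)
    simp only [id_eq] at h
    have he : (fun y : ℍ[ℝ] => y ^ n * y) = fun y => y ^ (n+1) := by
      funext y; rw [pow_succ]
    rw [show ((fun p : ℍ[ℝ] => p ^ n) * id) = fun y => y ^ (n+1) from he] at h
    refine h.congr_fderiv ?_
    refine ContinuousLinearMap.ext fun v => ?_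
    simp only [ContinuousLinearMap.add_apply, ContinuousLinearMap.smul_apply,
      ContinuousLinearMap.sum_apply, ContinuousLinearMap.mulLeftRight_apply,
      ContinuousLinearMap.id_apply, ContinuousLinearMap.smulRight_apply,
      smul_eq_mul, Finset.sum_range_succ, Finset.sum_mul, op_smul_eq_mul]
    rw [add_comm]
    congr 1
    · apply Finset.sum_congr rfl
      intro i hi
      simp only [Finset.mem_range] at hi
      rw [mul_assoc (q^i * v), ← pow_succ]
      congr 2
      omega
    · simp [Nat.sub_self]

theorem fderiv_pow_apply (n : ℕ) (q v : ℍ[ℝ]) :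
    fderiv ℝ (fun p => p ^ n) q v = ∑ i ∈ Finset.range n, q ^ i * v * q ^ (n - 1 - i) := by
  rw [(hasFDerivAt_pow'' n q).fderiv]
  simp

theorem side_swap (n : ℕ) (q : ℍ[ℝ]) :
    (∑ i ∈ Finset.range n, q ^ i * e1 * q ^ (n - 1 - i)) * e1 +
      (∑ i ∈ Finset.range n, q ^ i * e2 * q ^ (n - 1 - i)) * e2 +
      (∑ i ∈ Finset.range n, q ^ i * e3 * q ^ (n - 1 - i)) * e3 =
    e1 * (∑ i ∈ Finset.range n, q ^ i * e1 * q ^ (n - 1 - i)) +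
      e2 * (∑ i ∈ Finset.range n, q ^ i * e2 * q ^ (n - 1 - i)) +
      e3 * (∑ i ∈ Finset.range n, q ^ i * e3 * q ^ (n - 1 - i)) := by
  have L : (∑ i ∈ Finset.range n, q ^ i * e1 * q ^ (n - 1 - i)) * e1 +
      (∑ i ∈ Finset.range n, q ^ i * e2 * q ^ (n - 1 - i)) * e2 +
      (∑ i ∈ Finset.range n, q ^ i * e3 * q ^ (n - 1 - i)) * e3 =
      ∑ i ∈ Finset.range n,
        (q ^ (n-1) - (4 * (q ^ (n-1-i)).re : ℝ) • q ^ i) := by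
    rw [Finset.sum_mul, Finset.sum_mul, Finset.sum_mul, ← Finset.sum_add_distrib,
      ← Finset.sum_add_distrib]
    refine Finset.sum_congr rfl fun i hi => ?_
    simp only [Finset.mem_range] at hi
    have h1 : q ^ i * (e1 * q ^ (n-1-i) * e1 + e2 * q ^ (n-1-i) * e2 + e3 * q ^ (n-1-i) * e3)
        = q ^ i * e1 * q ^ (n - 1 - i) * e1 + q ^ i * e2 * q ^ (n - 1 - i) * e2 +
          q ^ i * e3 * q ^ (n - 1 - i) * e3 := by noncomm_ring
    rw [← h1, sandwich', mul_sub, ← pow_add, Quaternion.mul_coe_eq_smul]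
    congr 2
    omega
  have R : e1 * (∑ i ∈ Finset.range n, q ^ i * e1 * q ^ (n - 1 - i)) +
      e2 * (∑ i ∈ Finset.range n, q ^ i * e2 * q ^ (n - 1 - i)) +
      e3 * (∑ i ∈ Finset.range n, q ^ i * e3 * q ^ (n - 1 - i)) =
      ∑ i ∈ Finset.range n,
        (q ^ (n-1) - (4 * (q ^ i).re : ℝ) • q ^ (n-1-i)) := by
    rw [Finset.mul_sum, Finset.mul_sum, Finset.mul_sum, ← Finset.sum_add_distrib,
      ← Finset.sum_add_distrib]
    refine Finset.sum_congr rfl fun i hi => ?_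
    simp only [Finset.mem_range] at hi
    have h1 : (e1 * q ^ i * e1 + e2 * q ^ i * e2 + e3 * q ^ i * e3) * q ^ (n-1-i)
        = e1 * (q ^ i * e1 * q ^ (n - 1 - i)) + e2 * (q ^ i * e2 * q ^ (n - 1 - i)) +
          e3 * (q ^ i * e3 * q ^ (n - 1 - i)) := by noncomm_ring
    rw [← h1, sandwich', sub_mul, ← pow_add, Quaternion.coe_mul_eq_smul]
    congr 2
    omega
  rw [L, R]
  rw [Finset.sum_sub_distrib, Finset.sum_sub_distrib]
  congr 1
  rw [← Finset.sum_range_reflect (fun i => (4 * (q ^ i).re : ℝ) • q ^ (n-1-i)) n]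
  refine Finset.sum_congr rfl fun i hi => ?_
  simp only [Finset.mem_range] at hi
  congr 2
  omega

/-- for `n ≥ 1`, the right and left conjugate Fueter operators agree on
the monomial `q ↦ qⁿ`: `(qⁿ)D̄ = D̄(qⁿ)`. -/
theorem DbarR_pow_eq_Dbar_pow (n : ℕ) (hn : 1 ≤ n) (q : ℍ[ℝ]) :
    DbarR (fun p => p ^ n) q = Dbar (fun p => p ^ n) q := by
  unfold DbarR Dbar
  rw [fderiv_pow_apply, fderiv_pow_apply, fderiv_pow_apply, fderiv_pow_apply]
  have := side_swap n q
  rw [sub_sub, sub_sub, sub_sub, sub_sub]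
  congr 1
  rw [← add_assoc, this, add_assoc]
end
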